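/- For any two enhanced Lagrangians L° = (L,σ_L) and M° = (M,σ_M), every intertwining operator F ∈ Hom_{H(V,ω)}(H_{L°}, H_{M°}) is proportional to the averaging operator, i.e., there exists g_F ∈ ℂ such that F(f)(h) = g_F · Σ_{m ∈ M} f((m,0)·h) for all f ∈ H_{L°} and h ∈ H. -/

import Mathlib

/-!
Every intertwining operator `F ∈ Hom_{H(V,ω)}(H_{L°}, H_{M°})` between two models of
the Heisenberg representation is proportional to the averaging operator
`f ↦ (h ↦ Σ_{m ∈ M} f((m,0)·h))`.
-/

noncomputable section
set_option linter.unusedSectionVars false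
set_option synthInstance.maxHeartbeats 1000000
set_option maxHeartbeats 1000000

namespace KRSup

variable (F V : Type) [Field F] [Fintype F] [AddCommGroup V] [Module F V]

/-- Heisenberg group multiplication on `H = V × F`:
`(v,z)·(v',z') = (v+v', z+z'+½ω(v,v'))`. -/
def hMul (ω : LinearMap.BilinForm F V) (h h' : V × F) : V × F :=
  (h.1 + h'.1, h.2 + h'.2 + (2 : F)⁻¹ * ω h.1 h'.1)

variable {F V}

lemma hMul_assoc (ω : LinearMap.BilinForm F V) (h₁ h₂ h₃ : V × F) :
    hMul F V ω (hMul F V ω h₁ h₂) h₃ = hMul F V ω h₁ (hMul F V ω h₂ h₃) := by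
  simp only [hMul, Prod.mk.injEq, map_add, LinearMap.add_apply]
  exact ⟨add_assoc _ _ _, by ring⟩

variable (F V)

/-- The model `H_{L°}`: the space of functions `f : H → ℂ` with
`f((l,z)·h) = ψ(z)·f(h)` for all `l ∈ L`, `z ∈ F`. -/
def model (ω : LinearMap.BilinForm F V) (ψ : AddChar F ℂ) (L : Submodule F V) :
    Submodule ℂ ((V × F) → ℂ) where
  carrier := {f | ∀ l ∈ L, ∀ z : F, ∀ h : V × F, f (hMul F V ω (l, z) h) = ψ z * f h}
  add_mem' := by
    intro f g hf hg l hl z h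
    simp only [Pi.add_apply, hf l hl z h, hg l hl z h, mul_add]
  zero_mem' := by intro l hl z h; simp
  smul_mem' := by
    intro c f hf l hl z h
    simp only [Pi.smul_apply, smul_eq_mul, hf l hl z h]
    ring

/-- Right translation by `h₀` on functions on the Heisenberg group. -/
def rtrans (ω : LinearMap.BilinForm F V) (h₀ : V × F) :
    ((V × F) → ℂ) →ₗ[ℂ] ((V × F) → ℂ) where
  toFun f := fun h => f (hMul F V ω h h₀)
  map_add' _ _ := rfl
  map_smul' _ _ := rfl

lemma rtrans_mem (ω : LinearMap.BilinForm F V) (ψ : AddChar F ℂ) (L : Submodule F V)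
    (h₀ : V × F) {f : (V × F) → ℂ} (hf : f ∈ model F V ω ψ L) :
    rtrans F V ω h₀ f ∈ model F V ω ψ L := by
  intro l hl z h
  show f (hMul F V ω (hMul F V ω (l, z) h) h₀) = ψ z * f (hMul F V ω h h₀)
  rw [hMul_assoc]
  exact hf l hl z _

/-- The Heisenberg representation `π_{L°}` on the model `H_{L°}`, by right translation. -/
def heisAction (ω : LinearMap.BilinForm F V) (ψ : AddChar F ℂ) (L : Submodule F V)
    (h₀ : V × F) : ↥(model F V ω ψ L) →ₗ[ℂ] ↥(model F V ω ψ L) :=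
  (rtrans F V ω h₀).restrict (fun _ hf => rtrans_mem F V ω ψ L h₀ hf)

/-- An enhanced Lagrangian `(L, σ_L)`: a Lagrangian subspace `L ⊂ V` together with a
nonzero element `σ_L` of the `n`-th exterior power `ΛⁿL` (realized inside the
exterior algebra of `V` as the `n`-th power of the image of `L`). -/
structure EnhLag (ω : LinearMap.BilinForm F V) (n : ℕ) where
  /-- the Lagrangian subspace -/
  L : Submodule F V
  isotropic : ∀ x ∈ L, ∀ y ∈ L, ω x y = 0
  dim : Module.finrank F ↥L = n
  /-- the enhancement `σ_L ∈ ΛⁿL`, `σ_L ≠ 0` -/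
  σ : ExteriorAlgebra F V
  σ_mem : σ ∈ (Submodule.map (ExteriorAlgebra.ι F) L) ^ n
  σ_ne : σ ≠ 0

/-- The space of intertwining operators `Hom_{H(V,ω)}(H_{L°}, H_{M°})`:
linear maps commuting with the right-translation action of the Heisenberg group. -/
def intertwiners (ω : LinearMap.BilinForm F V) (ψ : AddChar F ℂ) (M L : Submodule F V) :
    Submodule ℂ (↥(model F V ω ψ L) →ₗ[ℂ] ↥(model F V ω ψ M)) where
  carrier := {T | ∀ h₀ : V × F,
    T ∘ₗ heisAction F V ω ψ L h₀ = heisAction F V ω ψ M h₀ ∘ₗ T}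
  add_mem' := by
    intro T S hT hS h₀
    simp only [LinearMap.add_comp, LinearMap.comp_add, hT h₀, hS h₀]
  zero_mem' := by intro h₀; simp
  smul_mem' := by
    intro c T hT h₀
    simp only [LinearMap.smul_comp, LinearMap.comp_smul, hT h₀]

open scoped Classical

section Aux

variable {F V}

lemma skew_aux (ω : LinearMap.BilinForm F V) (halt : ∀ v : V, ω v v = 0) (x y : V) :
    ω x y = - ω y x := by
  have h := halt (x + y)
  simp only [map_add, LinearMap.add_apply, halt x, halt y, zero_add, add_zero] at h
  linear_combination h

lemma two_ne_zero_of_odd_card (hq : Odd (Fintype.card F)) : (2 : F) ≠ 0 := by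
  intro h
  haveI := ringChar.charP F
  have hd : ringChar F ∣ 2 := by
    have h2 : ((2 : ℕ) : F) = 0 := by exact_mod_cast h
    exact (ringChar.spec F 2).mp h2
  have hp : (ringChar F).Prime := CharP.char_is_prime F (ringChar F)
  have hc2 : ringChar F = 2 := (Nat.prime_dvd_prime_iff_eq hp Nat.prime_two).mp hd
  have heven := FiniteField.even_card_iff_char_two.mp hc2
  have hodd := Nat.odd_iff.mp hq
  omega

/-- The basic "delta-like" elements of the model `H_{L°}`, one for each `u : V`,
supported on the coset `L̃·(u,0)`. -/
def fL (ω : LinearMap.BilinForm F V) (ψ : AddChar F ℂ) (L : Submodule F V) (u : V) :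
    (V × F) → ℂ :=
  fun p => if p.1 - u ∈ L then ψ (p.2 - (2 : F)⁻¹ * ω (p.1 - u) u) else 0

lemma fL_mem (ω : LinearMap.BilinForm F V) (ψ : AddChar F ℂ) (L : Submodule F V)
    (hiso : ∀ x ∈ L, ∀ y ∈ L, ω x y = 0) (u : V) :
    fL ω ψ L u ∈ model F V ω ψ L := by
  intro l hl z h
  obtain ⟨v, zv⟩ := h
  simp only [fL, hMul]
  by_cases hvu : v - u ∈ L
  · have h1 : l + v - u ∈ L := by
      rw [add_sub_assoc]; exact L.add_mem hl hvu
    simp only [h1, hvu, ↓reduceIte]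
    rw [← AddChar.map_add_eq_mul]
    congr 1
    have e1 : ω l v - ω l u = 0 := by
      have h0 := hiso l hl (v - u) hvu
      rwa [map_sub] at h0
    have e2 : ω (l + v - u) u = ω l u + (ω v u - ω u u) := by
      simp [add_sub_assoc, map_add, map_sub, LinearMap.add_apply, LinearMap.sub_apply,
        add_sub_assoc]
    have e3 : ω (v - u) u = ω v u - ω u u := by
      simp [map_sub, LinearMap.sub_apply]
    rw [e2, e3]
    linear_combination (2 : F)⁻¹ * e1
  · have h1 : ¬ (l + v - u ∈ L) := by
      rw [add_sub_assoc]
      intro hc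
      exact hvu ((Submodule.add_mem_iff_right L hl).mp hc)
    simp only [h1, hvu, ↓reduceIte, mul_zero]

lemma fL_rtrans (ω : LinearMap.BilinForm F V) (ψ : AddChar F ℂ) (L : Submodule F V)
    (hiso : ∀ x ∈ L, ∀ y ∈ L, ω x y = 0) (halt : ∀ v : V, ω v v = 0) (h2 : (2 : F) ≠ 0)
    (u m : V) (hmL : m ∈ L) (p : V × F) :
    fL ω ψ L u (hMul F V ω p (m, 0)) = ψ (ω u m) * fL ω ψ L u p := by
  obtain ⟨v, z⟩ := p
  simp only [fL, hMul]
  by_cases hvu : v - u ∈ L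
  · have h1 : v + m - u ∈ L := by
      rw [add_sub_right_comm]; exact L.add_mem hvu hmL
    simp only [h1, hvu, ↓reduceIte]
    rw [← AddChar.map_add_eq_mul]
    congr 1
    have e1 : ω v m - ω u m = 0 := by
      have h0 := hiso (v - u) hvu m hmL
      rwa [map_sub, LinearMap.sub_apply] at h0
    have eskew : ω m u = - ω u m := skew_aux ω halt m u
    have e2 : ω (v + m - u) u = ω v u + ω m u - ω u u := by
      simp [map_add, map_sub, LinearMap.add_apply, LinearMap.sub_apply]
    have e3 : ω (v - u) u = ω v u - ω u u := by
      simp [map_sub, LinearMap.sub_apply]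
    have hinv : (2 : F)⁻¹ * 2 = 1 := inv_mul_cancel₀ h2
    rw [e2, e3, eskew]
    linear_combination (2 : F)⁻¹ * e1 + ω u m * hinv
  · have h1 : ¬ (v + m - u ∈ L) := by
      intro hc
      apply hvu
      have := L.sub_mem hc hmL
      have he : v + m - u - m = v - u := by abel
      rwa [he] at this
    simp only [h1, hvu, ↓reduceIte, mul_zero]

lemma fL_rtrans_zero (ω : LinearMap.BilinForm F V) (ψ : AddChar F ℂ) (L : Submodule F V)
    (halt : ∀ v : V, ω v v = 0) (m : V) (p : V × F) :
    fL ω ψ L 0 (hMul F V ω p (m, 0)) = fL ω ψ L (-m) p := by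
  obtain ⟨v, z⟩ := p
  simp only [fL, hMul, sub_zero, sub_neg_eq_add]
  by_cases h1 : v + m ∈ L
  · rw [if_pos h1, if_pos h1]
    congr 1
    have e1 : ω (v + m) 0 = 0 := by simp
    have e2 : ω (v + m) (-m) = - (ω v m + ω m m) := by
      simp [map_add, LinearMap.add_apply, map_neg]
    rw [e1, e2, halt m]
    ring
  · rw [if_neg h1, if_neg h1]

lemma fL_shift (ω : LinearMap.BilinForm F V) (ψ : AddChar F ℂ) (L : Submodule F V)
    (hiso : ∀ x ∈ L, ∀ y ∈ L, ω x y = 0) (halt : ∀ v : V, ω v v = 0)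
    (l m : V) (hl : l ∈ L) (p : V × F) :
    fL ω ψ L (l + m) p = ψ ((2 : F)⁻¹ * ω l m) * fL ω ψ L m p := by
  obtain ⟨v, z⟩ := p
  simp only [fL]
  by_cases hvm : v - m ∈ L
  · have h1 : v - (l + m) ∈ L := by
      have he : v - (l + m) = v - m - l := by abel
      rw [he]; exact L.sub_mem hvm hl
    rw [if_pos h1, if_pos hvm, ← AddChar.map_add_eq_mul]
    congr 1
    have e1 : ω (v - m) l = 0 := hiso (v - m) hvm l hl
    simp only [map_sub, map_add, LinearMap.sub_apply, LinearMap.add_apply] at e1 ⊢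
    linear_combination (-(2 : F)⁻¹) * e1 + (2 : F)⁻¹ * halt l
  · have h1 : ¬ (v - (l + m) ∈ L) := by
      intro hc
      apply hvm
      have := L.add_mem hc hl
      have he : v - (l + m) + l = v - m := by abel
      rwa [he] at this
    rw [if_neg h1, if_neg hvm, mul_zero]

lemma card_shift [Fintype V] (L : Submodule F V) (v : V) :
    (∑ u : V, (if v - u ∈ L then (1 : ℂ) else 0)) = (Fintype.card ↥L : ℂ) := by
  rw [Finset.sum_boole]
  congr 1
  rw [← Fintype.card_subtype]
  exact Fintype.card_congr
    ⟨fun u => ⟨v - u.1, u.2⟩, fun l => ⟨v - l.1, by simpa using l.2⟩,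
      fun u => Subtype.ext (by simp), fun l => Subtype.ext (by simp)⟩

lemma model_decomp [Fintype V] (ω : LinearMap.BilinForm F V) (ψ : AddChar F ℂ)
    (L : Submodule F V) (f : (V × F) → ℂ) (hf : f ∈ model F V ω ψ L) (p : V × F) :
    (Fintype.card ↥L : ℂ) * f p = ∑ u : V, f (u, 0) * fL ω ψ L u p := by
  obtain ⟨v, z⟩ := p
  have e : ∀ u : V, f (u, 0) * fL ω ψ L u (v, z) = (if v - u ∈ L then (1 : ℂ) else 0) * f (v, z) := by
    intro u
    by_cases h : v - u ∈ L
    · simp only [fL, if_pos h, one_mul]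
      have h3 := hf (v - u) h (z - (2 : F)⁻¹ * ω (v - u) u) (u, 0)
      have h4 : hMul F V ω (v - u, z - (2 : F)⁻¹ * ω (v - u) u) (u, 0) = (v, z) := by
        simp only [hMul, Prod.mk.injEq]
        exact ⟨sub_add_cancel v u, by ring⟩
      rw [h4] at h3
      rw [h3]; ring
    · simp [fL, if_neg h]
  rw [Finset.sum_congr rfl (fun u _ => e u), ← Finset.sum_mul, card_shift L v]

/-- Evaluation at the identity, as a linear functional on the model. -/
def evalF (ω : LinearMap.BilinForm F V) (ψ : AddChar F ℂ) (M : Submodule F V) :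
    ↥(model F V ω ψ M) →ₗ[ℂ] ℂ where
  toFun g := (g : (V × F) → ℂ) ((0 : V), (0 : F))
  map_add' _ _ := rfl
  map_smul' _ _ := rfl

/-- The averaging functional `f ↦ ∑_{m ∈ M} f (m, 0)`. -/
def avgF (ω : LinearMap.BilinForm F V) (ψ : AddChar F ℂ) (L M : Submodule F V) [Fintype ↥M] :
    ↥(model F V ω ψ L) →ₗ[ℂ] ℂ where
  toFun f := ∑ m : ↥M, (f : (V × F) → ℂ) ((m : V), (0 : F))
  map_add' f g := by
    simp [Finset.sum_add_distrib]
  map_smul' c f := by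
    simp [Finset.mul_sum]

lemma hMul_zero_left (ω : LinearMap.BilinForm F V) (h : V × F) :
    hMul F V ω ((0 : V), (0 : F)) h = h := by
  simp only [hMul, LinearMap.map_zero₂, zero_add, mul_zero, add_zero]

lemma avgF_equivariant (ω : LinearMap.BilinForm F V) (ψ : AddChar F ℂ)
    (L M : Submodule F V) [Fintype ↥M]
    (hMiso : ∀ x ∈ M, ∀ y ∈ M, ω x y = 0)
    (m : V) (hm : m ∈ M) (z : F) (f : ↥(model F V ω ψ L)) :
    avgF ω ψ L M (heisAction F V ω ψ L (m, z) f) = ψ z * avgF ω ψ L M f := by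
  have step : ∀ m' : ↥M, (f : (V × F) → ℂ) (hMul F V ω ((m' : V), (0 : F)) (m, z))
      = ψ z * (f : (V × F) → ℂ) ((m' : V) + m, (0 : F)) := by
    intro m'
    have h1 : hMul F V ω ((m' : V), (0 : F)) (m, z) = ((m' : V) + m, z) := by
      simp [hMul, hMiso (m' : V) m'.2 m hm]
    have h2 : hMul F V ω ((0 : V), z) ((m' : V) + m, (0 : F)) = ((m' : V) + m, z) := by
      simp [hMul, LinearMap.map_zero₂]
    rw [h1, ← h2]
    exact f.2 0 L.zero_mem z _
  calc avgF ω ψ L M (heisAction F V ω ψ L (m, z) f)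
      = ∑ m' : ↥M, (f : (V × F) → ℂ) (hMul F V ω ((m' : V), (0 : F)) (m, z)) := rfl
    _ = ∑ m' : ↥M, ψ z * (f : (V × F) → ℂ) ((m' : V) + m, (0 : F)) :=
        Finset.sum_congr rfl fun m' _ => step m'
    _ = ψ z * ∑ m' : ↥M, (f : (V × F) → ℂ) ((m' : V) + m, (0 : F)) := by
        rw [Finset.mul_sum]
    _ = ψ z * avgF ω ψ L M f := by
        congr 1
        have h3 := Equiv.sum_comp (Equiv.addRight (⟨m, hm⟩ : ↥M))
          (fun m' : ↥M => (f : (V × F) → ℂ) ((m' : V), (0 : F)))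
        have h4 : avgF ω ψ L M f
            = ∑ m' : ↥M, (f : (V × F) → ℂ) ((m' : V), (0 : F)) := rfl
        rw [h4, ← h3]
        exact Finset.sum_congr rfl fun m' _ => by simp [Equiv.addRight]

lemma mem_sup_orth {n : ℕ} [FiniteDimensional F V]
    (ω : LinearMap.BilinForm F V) (halt : ∀ v : V, ω v v = 0)
    (hnd : ∀ v : V, (∀ u : V, ω v u = 0) → v = 0)
    (hdim : Module.finrank F V = 2 * n)
    (L M : Submodule F V)
    (hLiso : ∀ x ∈ L, ∀ y ∈ L, ω x y = 0) (hMiso : ∀ x ∈ M, ∀ y ∈ M, ω x y = 0)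
    (hLd : Module.finrank F ↥L = n) (hMd : Module.finrank F ↥M = n)
    (u : V) (hu : ∀ m ∈ M ⊓ L, ω u m = 0) : u ∈ L ⊔ M := by
  have hrefl : ω.IsRefl := fun x y h => by
    rw [skew_aux ω halt y x, h, neg_zero]
  have hnd' : ω.Nondegenerate :=
    ⟨hnd, fun y hy => hnd y fun x => by rw [skew_aux ω halt y x, hy x, neg_zero]⟩
  have horth : L ⊔ M ≤ ω.orthogonal (M ⊓ L) := by
    apply sup_le
    · intro x hx
      rw [LinearMap.BilinForm.mem_orthogonal_iff]
      intro mm hmm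
      exact hLiso mm hmm.2 x hx
    · intro x hx
      rw [LinearMap.BilinForm.mem_orthogonal_iff]
      intro mm hmm
      exact hMiso mm hmm.1 x hx
  have h1 := LinearMap.BilinForm.finrank_orthogonal hnd' (M ⊓ L)
  have h2 := Submodule.finrank_sup_add_finrank_inf_eq L M
  have h3 : Module.finrank F ↥(M ⊓ L) = Module.finrank F ↥(L ⊓ M) := by
    rw [inf_comm M L]
  have h4 : Module.finrank F ↥(L ⊓ M) ≤ Module.finrank F V :=
    Submodule.finrank_le _
  have h5 : Module.finrank F ↥(ω.orthogonal (M ⊓ L)) ≤ Module.finrank F ↥(L ⊔ M) := by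
    rw [h1, h3]
    omega
  have heq := Submodule.eq_of_le_of_finrank_le horth h5
  rw [heq, LinearMap.BilinForm.mem_orthogonal_iff]
  intro mm hmm
  show ω mm u = 0
  rw [skew_aux ω halt mm u, hu mm hmm, neg_zero]

lemma delta_vanishes [Fintype V]
    (ω : LinearMap.BilinForm F V) (ψ : AddChar F ℂ) (hψ : ψ ≠ 1)
    (halt : ∀ v : V, ω v v = 0) (h2 : (2 : F) ≠ 0)
    (L M : Submodule F V)
    (hLiso : ∀ x ∈ L, ∀ y ∈ L, ω x y = 0)
    (hMiso : ∀ x ∈ M, ∀ y ∈ M, ω x y = 0)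
    (hsup : ∀ u : V, (∀ m ∈ M ⊓ L, ω u m = 0) → u ∈ L ⊔ M)
    (δ : ↥(model F V ω ψ L) →ₗ[ℂ] ℂ)
    (hδeq : ∀ m ∈ M, ∀ (z : F) (f : ↥(model F V ω ψ L)),
      δ (heisAction F V ω ψ L (m, z) f) = ψ z * δ f)
    (hδ0 : δ ⟨fL ω ψ L 0, fL_mem ω ψ L hLiso 0⟩ = 0)
    (f : ↥(model F V ω ψ L)) : δ f = 0 := by
  have hstepA : ∀ m ∈ M, δ ⟨fL ω ψ L m, fL_mem ω ψ L hLiso m⟩ = 0 := by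
    intro m hm
    have h1 := hδeq (-m) (M.neg_mem hm) 0 ⟨fL ω ψ L 0, fL_mem ω ψ L hLiso 0⟩
    have h2' : heisAction F V ω ψ L ((-m : V), (0 : F)) ⟨fL ω ψ L 0, fL_mem ω ψ L hLiso 0⟩
        = ⟨fL ω ψ L (- -m), fL_mem ω ψ L hLiso (- -m)⟩ :=
      Subtype.ext (funext fun p => fL_rtrans_zero ω ψ L halt (-m) p)
    rw [h2'] at h1
    simp only [neg_neg] at h1
    rw [h1, AddChar.map_zero_eq_one, one_mul, hδ0]
  have hfLm : ∀ u : V, δ ⟨fL ω ψ L u, fL_mem ω ψ L hLiso u⟩ = 0 := by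
    intro u
    by_cases hcase : ∃ m ∈ M ⊓ L, ψ (ω u m) ≠ 1
    · obtain ⟨m, hm, hne⟩ := hcase
      have h1 := hδeq m hm.1 0 ⟨fL ω ψ L u, fL_mem ω ψ L hLiso u⟩
      have h2' : heisAction F V ω ψ L (m, (0 : F)) ⟨fL ω ψ L u, fL_mem ω ψ L hLiso u⟩
          = ψ (ω u m) • ⟨fL ω ψ L u, fL_mem ω ψ L hLiso u⟩ :=
        Subtype.ext (funext fun p => fL_rtrans ω ψ L hLiso halt h2 u m hm.2 p)
      rw [h2', map_smul, AddChar.map_zero_eq_one, one_mul, smul_eq_mul] at h1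
      have h3 : (ψ (ω u m) - 1) * δ ⟨fL ω ψ L u, fL_mem ω ψ L hLiso u⟩ = 0 := by
        linear_combination h1
      rcases mul_eq_zero.mp h3 with h | h
      · exact absurd (sub_eq_zero.mp h) hne
      · exact h
    · push_neg at hcase
      have hzero : ∀ m ∈ M ⊓ L, ω u m = 0 := by
        intro m hm
        by_contra ht
        apply hψ
        have hall : ∀ s : F, ψ s = 1 := by
          intro s
          have hms : (s * (ω u m)⁻¹) • m ∈ M ⊓ L := Submodule.smul_mem _ _ hm
          have h6 := hcase _ hms
          rwa [map_smul, smul_eq_mul, mul_assoc, inv_mul_cancel₀ ht, mul_one] at h6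
        exact DFunLike.ext ψ 1 fun s => by rw [hall s, AddChar.one_apply]
      have hmem := hsup u hzero
      obtain ⟨l, hl, m, hmM, rfl⟩ := Submodule.mem_sup.mp hmem
      have h2' : (⟨fL ω ψ L (l + m), fL_mem ω ψ L hLiso (l + m)⟩ : ↥(model F V ω ψ L))
          = ψ ((2 : F)⁻¹ * ω l m) • ⟨fL ω ψ L m, fL_mem ω ψ L hLiso m⟩ :=
        Subtype.ext (funext fun p => fL_shift ω ψ L hLiso halt l m hl p)
      rw [h2', map_smul, hstepA m hmM, smul_zero]
  have hcard : (Fintype.card ↥L : ℂ) ≠ 0 :=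
    Nat.cast_ne_zero.mpr Fintype.card_ne_zero
  have hdec : (Fintype.card ↥L : ℂ) • f
      = ∑ u : V, (f : (V × F) → ℂ) (u, 0) •
          (⟨fL ω ψ L u, fL_mem ω ψ L hLiso u⟩ : ↥(model F V ω ψ L)) := by
    apply Subtype.ext
    rw [AddSubmonoidClass.coe_finset_sum]
    funext p
    have := model_decomp ω ψ L (f : (V × F) → ℂ) f.2 p
    simpa [Finset.sum_apply] using this
  have h5 : (Fintype.card ↥L : ℂ) • δ f = 0 := by
    rw [← map_smul, hdec, map_sum]
    refine Finset.sum_eq_zero fun u _ => ?_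
    rw [map_smul, hfLm u, smul_zero]
  rcases smul_eq_zero.mp h5 with h | h
  · exact absurd h hcard
  · exact h

end Aux


/-- Every intertwining operator `T ∈ Hom_{H(V,ω)}(H_{L°}, H_{M°})` is proportional to
the averaging operator: there is `g_T ∈ ℂ` with
`T(f)(h) = g_T · Σ_{m ∈ M} f((m,0)·h)` for all `f ∈ H_{L°}` and `h ∈ H`. -/
theorem intertwiner_proportional_to_averaging
    (n : ℕ) [FiniteDimensional F V] [Fintype V] (hdim : Module.finrank F V = 2 * n)
    (hq : Odd (Fintype.card F))
    (ω : LinearMap.BilinForm F V)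
    (halt : ∀ v : V, ω v v = 0)
    (hnd : ∀ v : V, (∀ u : V, ω v u = 0) → v = 0)
    (ψ : AddChar F ℂ) (hψ : ψ ≠ 1)
    (Lo Mo : EnhLag F V ω n)
    (T : ↥(model F V ω ψ Lo.L) →ₗ[ℂ] ↥(model F V ω ψ Mo.L))
    (hT : T ∈ intertwiners F V ω ψ Mo.L Lo.L) :
    ∃ c : ℂ, ∀ (f : ↥(model F V ω ψ Lo.L)) (h : V × F),
      (T f : (V × F) → ℂ) h
        = c * ∑ m : ↥Mo.L, (f : (V × F) → ℂ) (hMul F V ω ((m : V), (0 : F)) h) := by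
  have h2 : (2 : F) ≠ 0 := two_ne_zero_of_odd_card hq
  have hsup : ∀ u : V, (∀ m ∈ Mo.L ⊓ Lo.L, ω u m = 0) → u ∈ Lo.L ⊔ Mo.L := fun u hu =>
    mem_sup_orth ω halt hnd hdim Lo.L Mo.L Lo.isotropic Mo.isotropic Lo.dim Mo.dim u hu
  set f0 : ↥(model F V ω ψ Lo.L) := ⟨fL ω ψ Lo.L 0, fL_mem ω ψ Lo.L Lo.isotropic 0⟩ with hf0
  -- the averaging functional is nonzero at f0
  have hA0 : avgF ω ψ Lo.L Mo.L f0
      = ((Finset.univ.filter (fun m : ↥Mo.L => (m : V) ∈ Lo.L)).card : ℂ) := by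
    rw [← Finset.sum_boole]
    refine Finset.sum_congr rfl fun m _ => ?_
    simp [avgF, f0, fL, AddChar.map_zero_eq_one]
  have hA0ne : avgF ω ψ Lo.L Mo.L f0 ≠ 0 := by
    rw [hA0]
    have hpos : 0 < (Finset.univ.filter (fun m : ↥Mo.L => (m : V) ∈ Lo.L)).card := by
      apply Finset.card_pos.mpr
      exact ⟨⟨0, Mo.L.zero_mem⟩, by simp [Lo.L.zero_mem]⟩
    exact_mod_cast hpos.ne'
  set φ : ↥(model F V ω ψ Lo.L) →ₗ[ℂ] ℂ := evalF ω ψ Mo.L ∘ₗ T with hφdef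
  set c : ℂ := φ f0 / avgF ω ψ Lo.L Mo.L f0 with hc
  set δ : ↥(model F V ω ψ Lo.L) →ₗ[ℂ] ℂ := φ - c • avgF ω ψ Lo.L Mo.L with hδdef
  -- equivariance of the evaluation-of-T functional
  have hφeq : ∀ h₀ : V × F, ∀ f : ↥(model F V ω ψ Lo.L),
      φ (heisAction F V ω ψ Lo.L h₀ f) = (T f : (V × F) → ℂ) (hMul F V ω ((0 : V), (0 : F)) h₀) := by
    intro h₀ f
    have hTcomm : T (heisAction F V ω ψ Lo.L h₀ f) = heisAction F V ω ψ Mo.L h₀ (T f) := by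
      have := LinearMap.congr_fun (hT h₀) f
      simpa using this
    show evalF ω ψ Mo.L (T (heisAction F V ω ψ Lo.L h₀ f)) = _
    rw [hTcomm]
    rfl
  have hφeq' : ∀ m ∈ Mo.L, ∀ (z : F) (f : ↥(model F V ω ψ Lo.L)),
      φ (heisAction F V ω ψ Lo.L (m, z) f) = ψ z * φ f := by
    intro m hm z f
    rw [hφeq (m, z) f, hMul_zero_left]
    have hmz : hMul F V ω (m, z) ((0 : V), (0 : F)) = (m, z) := by
      simp [hMul]
    have := (T f).2 m hm z ((0 : V), (0 : F))
    rw [hmz] at this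
    rw [this]
    rfl
  have hδeq : ∀ m ∈ Mo.L, ∀ (z : F) (f : ↥(model F V ω ψ Lo.L)),
      δ (heisAction F V ω ψ Lo.L (m, z) f) = ψ z * δ f := by
    intro m hm z f
    rw [hδdef]
    simp only [LinearMap.sub_apply, LinearMap.smul_apply, smul_eq_mul]
    rw [hφeq' m hm z f, avgF_equivariant ω ψ Lo.L Mo.L Mo.isotropic m hm z f]
    ring
  have hδ0 : δ f0 = 0 := by
    rw [hδdef]
    simp only [LinearMap.sub_apply, LinearMap.smul_apply, smul_eq_mul]
    rw [hc, div_mul_cancel₀ _ hA0ne, sub_self]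
  have hδall := delta_vanishes ω ψ hψ halt h2 Lo.L Mo.L Lo.isotropic Mo.isotropic hsup δ
    hδeq hδ0
  refine ⟨c, fun f h => ?_⟩
  have hd := hδall (heisAction F V ω ψ Lo.L h f)
  rw [hδdef] at hd
  simp only [LinearMap.sub_apply, LinearMap.smul_apply, smul_eq_mul] at hd
  rw [hφeq h f, hMul_zero_left] at hd
  have hAv : avgF ω ψ Lo.L Mo.L (heisAction F V ω ψ Lo.L h f)
      = ∑ m : ↥Mo.L, (f : (V × F) → ℂ) (hMul F V ω ((m : V), (0 : F)) h) := rfl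
  rw [hAv] at hd
  linear_combination hd


end KRSup
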